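/- In a suitable permuted basis, any mixed Weyl superoperator Φ_p = Σ_{kl} p_{kl} U_{kl} ⊗ conj(U_{kl}) of order N² is block diagonal with N circulant blocks of size N: for the basis {|j⊕k, j⟩}, ⟨j⊕k, j| Φ_p |j'⊕k', j'⟩ = δ_{kk'} Σ_n p_{(j−j' mod N), n} ω^{nk}. Consequently the k-th block equals Σ_{k'} (Σ_l p_{k'l} ω^{kl}) X^{k'}, and the k=0 block equals the classical transition matrix T = Σ_{k'} q_{k'} X^{k'} with q_{k'} = Σ_l p_{k'l}. -/

import Mathlib

open Matrix Complex
open scoped Kronecker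

/-- The `N`-th root of unity `ω = exp(2πi/N)`. -/
noncomputable def omega (N : ℕ) : ℂ := Complex.exp (2 * Real.pi * Complex.I / N)

/-- The cyclic shift matrix `X` with `X |i⟩ = |i ⊕ 1⟩`. -/
def Xmat (N : ℕ) [NeZero N] : Matrix (Fin N) (Fin N) ℂ :=
  fun i j => if i = j + 1 then 1 else 0

/-- The clock matrix `Z = diag(1, ω, ..., ω^{N-1})`. -/
noncomputable def Zmat (N : ℕ) [NeZero N] : Matrix (Fin N) (Fin N) ℂ :=
  Matrix.diagonal (fun j => omega N ^ (j : ℕ))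

/-- The Weyl matrices `U_{kl} = X^k Z^l`. -/
noncomputable def WeylU (N : ℕ) [NeZero N] (k l : Fin N) : Matrix (Fin N) (Fin N) ℂ :=
  Xmat N ^ (k : ℕ) * Zmat N ^ (l : ℕ)

/-- The mixed Weyl superoperator `Φ_p = Σ_{kl} p_{kl} U_{kl} ⊗ conj(U_{kl})`. -/
noncomputable def weylSuper (N : ℕ) [NeZero N] (p : Fin N → Fin N → ℂ) :
    Matrix (Fin N × Fin N) (Fin N × Fin N) ℂ :=
  ∑ k, ∑ l, p k l • (WeylU N k l ⊗ₖ (WeylU N k l).map (starRingEnd ℂ))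


section Aux
open scoped Fin.NatCast Fin.IntCast Fin.CommRing
variable {N : ℕ} [NeZero N]

lemma omega_pow_N : omega N ^ N = 1 := by
  rw [omega, ← Complex.exp_nat_mul, mul_div_cancel₀]
  · exact Complex.exp_two_pi_mul_I
  · exact_mod_cast (Nat.cast_ne_zero (R := ℂ)).mpr (NeZero.ne N)

lemma omega_pow_mod (a : ℕ) : omega N ^ a = omega N ^ (a % N) := by
  conv_lhs => rw [← Nat.mod_add_div a N]
  rw [pow_add, pow_mul, omega_pow_N, one_pow, mul_one]

lemma omega_pow_congr {a b : ℕ} (h : a ≡ b [MOD N]) :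
    omega N ^ a = omega N ^ b := by
  rw [omega_pow_mod a, omega_pow_mod b, h]

lemma omega_ne_zero : omega N ≠ 0 := Complex.exp_ne_zero _

lemma conj_omega : (starRingEnd ℂ) (omega N) = (omega N)⁻¹ := by
  rw [omega, ← Complex.exp_conj, ← Complex.exp_neg]
  congr 1
  simp only [map_div₀, _root_.map_mul, Complex.conj_I, map_ofNat, Complex.conj_ofReal,
    Complex.conj_natCast]
  ring

lemma Xmat_pow_apply (m : ℕ) (i j : Fin N) :
    (Xmat N ^ m) i j = if i = j + (m : Fin N) then 1 else 0 := by
  induction m generalizing j with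
  | zero => simp [Matrix.one_apply]
  | succ m ih =>
    rw [pow_succ, Matrix.mul_apply]
    simp only [Xmat, mul_ite, mul_one, mul_zero]
    rw [Finset.sum_ite_eq' Finset.univ (j + 1) (fun t => (Xmat N ^ m) i t)]
    simp only [Finset.mem_univ, if_true, ih]
    have : j + ((m : Fin N) + 1) = j + 1 + (m : Fin N) := by ring
    simp [Nat.cast_add, Nat.cast_one, this]

lemma WeylU_apply (k l : Fin N) (i j : Fin N) :
    WeylU N k l i j = if i = j + k then omega N ^ ((j : ℕ) * (l : ℕ)) else 0 := by
  rw [WeylU, Zmat, Matrix.diagonal_pow, Matrix.mul_diagonal, Xmat_pow_apply]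
  simp [Fin.cast_val_eq_self, ite_mul, pow_mul]

lemma phase (j' k l : Fin N) :
    omega N ^ (((j' + k : Fin N) : ℕ) * (l : ℕ)) *
      (starRingEnd ℂ) (omega N ^ ((j' : ℕ) * (l : ℕ))) =
      omega N ^ ((l : ℕ) * (k : ℕ)) := by
  rw [map_pow, conj_omega, inv_pow,
    mul_inv_eq_iff_eq_mul₀ (pow_ne_zero _ omega_ne_zero), ← pow_add]
  apply omega_pow_congr
  calc ((j' + k : Fin N) : ℕ) * (l : ℕ)
      ≡ ((j' : ℕ) + (k : ℕ)) * (l : ℕ) [MOD N] := by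
        exact Nat.ModEq.mul_right _ (by rw [Fin.val_add]; exact (Nat.mod_modEq _ _))
    _ = (l : ℕ) * (k : ℕ) + (j' : ℕ) * (l : ℕ) := by ring

lemma weylSuper_apply (p : Fin N → Fin N → ℂ) (a b c d : Fin N) :
    weylSuper N p (a, b) (c, d) = ∑ k : Fin N, ∑ l : Fin N,
      p k l * (WeylU N k l a c * (starRingEnd ℂ) (WeylU N k l b d)) := by
  simp [weylSuper, Matrix.sum_apply, Matrix.kroneckerMap_apply, Matrix.smul_apply,
    Matrix.map_apply, smul_eq_mul]

lemma entry_formula (p : Fin N → Fin N → ℂ) (j k j' k' : Fin N) :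
    weylSuper N p (j + k, j) (j' + k', j') =
      if k = k' then ∑ n : Fin N, p (j - j') n * omega N ^ ((n : ℕ) * (k : ℕ)) else 0 := by
  rw [weylSuper_apply]
  rw [Finset.sum_eq_single (j - j')]
  · simp only [WeylU_apply]
    have h2 : j = j' + (j - j') := by ring
    simp only [if_pos h2]
    have h3 : j + k = j' + k' + (j - j') ↔ k = k' := by
      constructor
      · intro h
        have : j + k = j + k' := by rw [h]; ring
        exact add_left_cancel this
      · intro h; rw [h]; ring
    by_cases hk : k = k'
    · subst hk
      simp only [if_pos (h3.mpr rfl), if_pos rfl]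
      refine Finset.sum_congr rfl fun n _ => ?_
      congr 1
      exact phase j' k n
    · simp only [if_neg hk, if_neg (fun h => hk (h3.mp h))]
      simp
  · intro a _ ha
    have : ¬ (j = j' + a) := fun h => ha (by rw [h]; ring)
    simp [WeylU_apply, this]
  · intro h; exact absurd (Finset.mem_univ _) h

lemma block_eq (p : Fin N → Fin N → ℂ) (k : Fin N) :
    (fun j j' : Fin N => weylSuper N p (j + k, j) (j' + k, j')) =
      ∑ k' : Fin N, (∑ l : Fin N, p k' l * omega N ^ ((k : ℕ) * (l : ℕ))) •
        Xmat N ^ (k' : ℕ) := by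
  funext j j'
  have lhs := entry_formula p j k j' k
  rw [if_pos rfl] at lhs
  calc weylSuper N p (j + k, j) (j' + k, j')
      = ∑ n : Fin N, p (j - j') n * omega N ^ ((n : ℕ) * (k : ℕ)) := lhs
    _ = ∑ l : Fin N, p (j - j') l * omega N ^ ((k : ℕ) * (l : ℕ)) := by
        refine Finset.sum_congr rfl fun n _ => by rw [mul_comm (n : ℕ) (k : ℕ)]
    _ = ∑ k' : Fin N, if k' = j - j' then
          (∑ l : Fin N, p k' l * omega N ^ ((k : ℕ) * (l : ℕ))) else 0 := by
        rw [Finset.sum_ite_eq' Finset.univ (j - j')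
          (fun k' => ∑ l : Fin N, p k' l * omega N ^ ((k : ℕ) * (l : ℕ)))]
        simp
    _ = (∑ k' : Fin N, (∑ l : Fin N, p k' l * omega N ^ ((k : ℕ) * (l : ℕ))) •
          Xmat N ^ (k' : ℕ)) j j' := by
        simp only [Matrix.sum_apply, Matrix.smul_apply, Xmat_pow_apply,
          Fin.cast_val_eq_self, smul_eq_mul]
        refine Finset.sum_congr rfl fun k' _ => ?_
        by_cases h : k' = j - j'
        · rw [if_pos h, if_pos (by rw [h]; ring), mul_one]
        · rw [if_neg h, if_neg (fun hh => h (by rw [hh]; ring)), mul_zero]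

end Aux

/-- In the permuted basis `|j⊕k, j⟩`, a mixed Weyl superoperator is block diagonal with
`N` circulant blocks of size `N`: the matrix element is
`δ_{kk'} Σ_n p_{j−j', n} ω^{nk}`; the `k`-th block equals
`Σ_{k'} (Σ_l p_{k'l} ω^{kl}) X^{k'}`; and the `0`-th block is the classical transition
matrix `Σ_{k'} q_{k'} X^{k'}` with `q_{k'} = Σ_l p_{k'l}`. -/
theorem weylSuper_block_diagonal (N : ℕ) [NeZero N] (p : Fin N → Fin N → ℂ) :
    (∀ j k j' k' : Fin N,
      weylSuper N p (j + k, j) (j' + k', j') =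
        if k = k' then ∑ n : Fin N, p (j - j') n * omega N ^ ((n : ℕ) * (k : ℕ)) else 0) ∧
    (∀ k : Fin N,
      (fun j j' : Fin N => weylSuper N p (j + k, j) (j' + k, j')) =
        ∑ k' : Fin N, (∑ l : Fin N, p k' l * omega N ^ ((k : ℕ) * (l : ℕ))) •
          Xmat N ^ (k' : ℕ)) ∧
    ((fun j j' : Fin N => weylSuper N p (j + 0, j) (j' + 0, j')) =
        ∑ k' : Fin N, (∑ l : Fin N, p k' l) • Xmat N ^ (k' : ℕ)) := by
  refine ⟨fun j k j' k' => entry_formula p j k j' k', fun k => block_eq p k, ?_⟩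
  have h := block_eq p 0
  simpa using h
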